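/- Let φ be a boolean formula in u free boolean variables, and let S be the deterministic mechanism with X = Y = {0,1}, Act = {0,1}^u, defined by the boolean function f(x, b_1,…,b_u) = x ∧ φ(b_1,…,b_u) (i.e. p_b(y|x)=1 iff f(x,b)=y). Let p be the uniform prior on {0,1}, and let U be an uncertainty measure such that U vanishes on point-mass distributions and U is strictly positive on the uniform distribution. Then there exists a strategy σ of length 1 with I_σ(S,p) > 0 if and only if φ is satisfiable. -/

import Mathlib

open scoped BigOperators Classical

noncomputable section

variable {X Y A : Type*}

/-- Conditional product of transition probabilities along `ys`, where the action at each
step is chosen by the strategy `σ` applied to the accumulated prefix `pre`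
(`0` if the strategy is undefined on some prefix). -/
def likAux (M : A → X → Y → ℝ) (σ : List Y → Option A) (x : X) : List Y → List Y → ℝ
  | _, [] => 1
  | pre, y :: ys => ((σ pre).elim 0 fun a => M a x y) * likAux M σ x (pre ++ [y]) ys

/-- `p_σ(ys | x)`: the probability of the (maximal) observation sequence `ys`
given the secret `x`, under the finite strategy `σ`. A sequence is maximal when its
last proper prefix is in the domain of `σ` but the sequence itself is not. -/
def condDist (M : A → X → Y → ℝ) (σ : List Y → Option A) (x : X) (ys : List Y) : ℝ :=
  if ys ≠ [] ∧ (σ ys.dropLast).isSome ∧ σ ys = none then likAux M σ x [] ys else 0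

/-- joint distribution `p_σ(x, ys)` induced by the prior `p` and the strategy `σ`. -/
def joint (M : A → X → Y → ℝ) (σ : List Y → Option A) (p : X → ℝ) (x : X) (ys : List Y) : ℝ :=
  p x * condDist M σ x ys

/-- marginal `p_σ(ys)` on observation sequences. -/
def obsProb [Fintype X] (M : A → X → Y → ℝ) (σ : List Y → Option A) (p : X → ℝ)
    (ys : List Y) : ℝ :=
  ∑ x : X, joint M σ p x ys

/-- posterior `p_σ(·|ys)` on secrets. -/
def post [Fintype X] (M : A → X → Y → ℝ) (σ : List Y → Option A) (p : X → ℝ)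
    (ys : List Y) : X → ℝ :=
  fun x => joint M σ p x ys / obsProb M σ p ys

/-- conditional uncertainty `U_σ(X|Y) = Σ_{ys : p_σ(ys)>0} p_σ(ys)·U(p_σ(·|ys))`
(terms with `p_σ(ys) = 0` contribute `0`). -/
def condUncert [Fintype X] (U : (X → ℝ) → ℝ) (M : A → X → Y → ℝ) (σ : List Y → Option A)
    (p : X → ℝ) : ℝ :=
  ∑' ys : List Y, obsProb M σ p ys * U (post M σ p ys)

/-- information leakage `I_σ(S,p) = U(p) − U_σ(X|Y)`. -/
def leak [Fintype X] (U : (X → ℝ) → ℝ) (M : A → X → Y → ℝ) (σ : List Y → Option A)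
    (p : X → ℝ) : ℝ :=
  U p - condUncert U M σ p

/-- the domain of a strategy is prefix-closed. -/
def PrefixClosed (σ : List Y → Option A) : Prop :=
  ∀ l l' : List Y, l <+: l' → (σ l').isSome → (σ l).isSome

/-- a finite strategy: nonempty prefix-closed finite domain. -/
def FiniteStrategy (σ : List Y → Option A) : Prop :=
  (σ []).isSome ∧ PrefixClosed σ ∧ {l : List Y | (σ l).isSome}.Finite

/-- the strategy has length exactly `n` (one plus the maximal length of a sequence
in its domain). -/
def HasLength (σ : List Y → Option A) (n : ℕ) : Prop :=
  (∀ ys, (σ ys).isSome → ys.length + 1 ≤ n) ∧ ∃ ys, (σ ys).isSome ∧ ys.length + 1 = n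

/-- the set of actions occurring in a strategy. -/
def rangeActs (σ : List Y → Option A) : Set A :=
  {a | ∃ ys, σ ys = some a}

/-- the non-adaptive (complete) strategy playing the listed actions in order:
the action played only depends on the number of past observations. -/
def ofList (as : List A) : List Y → Option A := fun ys => as[ys.length]?

/-- an action-based randomization mechanism: each row of each matrix `M_a` is a
probability distribution on observations. -/
def IsMechanism [Fintype Y] (M : A → X → Y → ℝ) : Prop :=
  ∀ a x, M a x ∈ stdSimplex ℝ Y

/-- an uncertainty measure: concave and continuous on the probability simplex. -/
def IsUncertainty [Fintype X] (U : (X → ℝ) → ℝ) : Prop :=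
  ConcaveOn ℝ (stdSimplex ℝ X) U ∧ ContinuousOn U (stdSimplex ℝ X)

/-- the one-step strategy playing `a` at the empty history. -/
def oneStep {u : ℕ} (a : Fin u → Bool) : List Bool → Option (Fin u → Bool) :=
  fun ys => if ys = [] then some a else none

lemma condDist_oneStep_single {u : ℕ} (M : (Fin u → Bool) → Bool → Bool → ℝ)
    (a : Fin u → Bool) (x y : Bool) :
    condDist M (oneStep a) x [y] = M a x y := by
  simp [condDist, oneStep, likAux]

lemma condDist_oneStep_other {u : ℕ} (M : (Fin u → Bool) → Bool → Bool → ℝ)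
    (a : Fin u → Bool) (x : Bool) (ys : List Bool)
    (h : ∀ y : Bool, ys ≠ [y]) : condDist M (oneStep a) x ys = 0 := by
  rcases ys with _ | ⟨y, _ | ⟨z, t⟩⟩
  · simp [condDist]
  · exact absurd rfl (h y)
  · simp [condDist, oneStep]

lemma condUncert_oneStep {u : ℕ} (φ : (Fin u → Bool) → Bool) (U : (Bool → ℝ) → ℝ)
    (hpoint : ∀ b : Bool, U (fun x => if x = b then 1 else 0) = 0) (a : Fin u → Bool) :
    condUncert U (fun b x y => if (x && φ b) = y then (1 : ℝ) else 0)
      (oneStep a) (fun _ => (1 : ℝ) / 2)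
      = if φ a then 0 else U (fun _ => (1 : ℝ) / 2) := by
  set M : (Fin u → Bool) → Bool → Bool → ℝ :=
    fun b x y => if (x && φ b) = y then (1 : ℝ) else 0 with hM
  set p : Bool → ℝ := fun _ => (1 : ℝ) / 2 with hp
  have hobs : ∀ ys : List Bool, ys ∉ ({[false], [true]} : Finset (List Bool)) →
      obsProb M (oneStep a) p ys * U (post M (oneStep a) p ys) = 0 := by
    intro ys hys
    have h : ∀ y : Bool, ys ≠ [y] := by
      intro y hy
      subst hy
      cases y <;> simp at hys
    have : obsProb M (oneStep a) p ys = 0 := by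
      simp [obsProb, joint, condDist_oneStep_other M a _ ys h]
    rw [this, zero_mul]
  have htsum : condUncert U M (oneStep a) p =
      ∑ ys ∈ ({[false], [true]} : Finset (List Bool)),
        obsProb M (oneStep a) p ys * U (post M (oneStep a) p ys) := by
    exact tsum_eq_sum hobs
  have hob : ∀ y : Bool, obsProb M (oneStep a) p [y]
      = (1 : ℝ) / 2 * M a false y + (1 : ℝ) / 2 * M a true y := by
    intro y
    simp [obsProb, joint, condDist_oneStep_single, Fintype.sum_bool, hp]
    ring
  by_cases hφ : φ a = true
  · -- leaking case: posterior is a point mass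
    have hMval : ∀ x y : Bool, M a x y = if x = y then 1 else 0 := by
      intro x y; simp [hM, hφ]
    have hoby : ∀ y : Bool, obsProb M (oneStep a) p [y] = 1 / 2 := by
      intro y; rw [hob y, hMval, hMval]; cases y <;> norm_num
    have hpost : ∀ y : Bool, post M (oneStep a) p [y] = fun x => if x = y then 1 else 0 := by
      intro y
      funext x
      simp only [post, joint, condDist_oneStep_single, hoby, hMval, hp]
      rw [show obsProb M (oneStep a) (fun _ => (1 : ℝ) / 2) [y] = 1 / 2 from hoby y]
      by_cases hxy : x = y <;> simp [hxy] <;> norm_num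
    rw [htsum]
    rw [Finset.sum_pair (by simp : ([false] : List Bool) ≠ [true])]
    rw [hpost, hpost, hpoint, hpoint, hφ]
    simp
  · -- non-leaking case: observation is constantly `false`
    have hφ' : φ a = false := by simpa using hφ
    have hMval : ∀ x y : Bool, M a x y = if false = y then 1 else 0 := by
      intro x y; simp [hM, hφ']
    have hobf : obsProb M (oneStep a) p [false] = 1 := by
      rw [hob, hMval, hMval]; norm_num
    have hobt : obsProb M (oneStep a) p [true] = 0 := by
      rw [hob, hMval, hMval]; norm_num
    have hpost : post M (oneStep a) p [false] = p := by
      funext x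
      simp only [post, joint, condDist_oneStep_single]
      rw [hobf, hMval]
      simp [hp]
    rw [htsum]
    rw [Finset.sum_pair (by simp : ([false] : List Bool) ≠ [true])]
    rw [hobf, hobt, hpost, hφ']
    simp [hp]

/-- Theorem 4.4, key reduction: for the deterministic mechanism with
secrets and observations `{0,1}`, actions `{0,1}^u`, defined by
`f(x,b) = x ∧ φ(b)`, the uniform prior on `{0,1}`, and any uncertainty measure `U`
vanishing on point masses and strictly positive on the uniform distribution,
there exists a strategy of length 1 with strictly positive leakage
iff `φ` is satisfiable. -/
theorem length_one_positive_leak_iff_satisfiable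
    (u : ℕ) (φ : (Fin u → Bool) → Bool)
    (U : (Bool → ℝ) → ℝ) (hU : IsUncertainty U)
    (hpoint : ∀ b : Bool, U (fun x => if x = b then 1 else 0) = 0)
    (hunif : 0 < U (fun _ => (1 : ℝ) / 2)) :
    (∃ σ : List Bool → Option (Fin u → Bool),
        FiniteStrategy σ ∧ (∀ ys, (σ ys).isSome → ys.length + 1 ≤ 1) ∧
        0 < leak U (fun b x y => if (x && φ b) = y then (1 : ℝ) else 0) σ
            (fun _ => (1 : ℝ) / 2)) ↔
      (∃ b : Fin u → Bool, φ b = true) := by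
  constructor
  · rintro ⟨σ, ⟨h0, _, _⟩, hlen, hpos⟩
    obtain ⟨a, ha⟩ := Option.isSome_iff_exists.mp h0
    have hσ : σ = oneStep a := by
      funext ys
      by_cases hys : ys = []
      · subst hys; simpa [oneStep] using ha
      · have : ¬ (σ ys).isSome := by
          intro h
          have hle := hlen ys h
          exact hys (List.length_eq_zero_iff.mp (by omega))
        simp [oneStep, hys, Option.not_isSome_iff_eq_none.mp this]
    rw [hσ] at hpos
    refine ⟨a, ?_⟩
    by_contra hφ
    have hφ' : φ a = false := by simpa using hφ
    rw [leak, condUncert_oneStep φ U hpoint a, hφ'] at hpos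
    simp at hpos
  · rintro ⟨a, ha⟩
    refine ⟨oneStep a, ⟨by simp [oneStep], ?_, ?_⟩, ?_, ?_⟩
    · intro l l' hpre h
      have hl' : l' = [] := by
        by_contra hne
        simp [oneStep, hne] at h
      subst hl'
      have : l = [] := List.prefix_nil.mp hpre
      simp [this, oneStep]
    · refine Set.Finite.subset (Set.finite_singleton []) ?_
      intro l hl
      rw [Set.mem_singleton_iff]
      by_contra hne
      simp [oneStep, hne] at hl
    · intro ys hys
      by_contra h
      have : ys ≠ [] := by intro hy; subst hy; simp at h
      simp [oneStep, this] at hys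
    · rw [leak, condUncert_oneStep φ U hpoint a, ha]
      simpa using hunif

end
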